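/- arXiv:2605.25122 — 3 statements merged into one kernel-verified Lean document; each statement's English description precedes it below -/
import Mathlib

section
/- For a convex body K in R^n, the function z ↦ vol_n(conv({z} ∪ K) \ K) is convex on ℝ^n. -/
open MeasureTheory Set


/-- 1-D core lemma. -/
lemma oneDim_vol_le (A B C : Set ℝ) (a b : ℝ) (ha : 0 ≤ a) (hb : 0 ≤ b)
    (hA : Convex ℝ A) (hB : Convex ℝ B)
    (hAa : BddAbove A) (hAb : BddBelow A) (hBa : BddAbove B) (hBb : BddBelow B)
    (hC : ∀ c ∈ C, ∃ x ∈ A, ∃ y ∈ B, c = a * x + b * y) :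
    volume C ≤ ENNReal.ofReal a * volume A + ENNReal.ofReal b * volume B := by
  rcases C.eq_empty_or_nonempty with rfl | ⟨c₀, hc₀⟩
  · simp
  obtain ⟨x₀, hx₀, y₀, hy₀, -⟩ := hC c₀ hc₀
  have hAne : A.Nonempty := ⟨x₀, hx₀⟩
  have hBne : B.Nonempty := ⟨y₀, hy₀⟩
  have hdA : 0 ≤ sSup A - sInf A := sub_nonneg.2 (le_trans (csInf_le hAb hx₀) (le_csSup hAa hx₀))
  have hdB : 0 ≤ sSup B - sInf B := sub_nonneg.2 (le_trans (csInf_le hBb hy₀) (le_csSup hBa hy₀))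
  have hsub : C ⊆ Icc (a * sInf A + b * sInf B) (a * sSup A + b * sSup B) := by
    intro c hc
    obtain ⟨x, hx, y, hy, rfl⟩ := hC c hc
    constructor
    · exact add_le_add (mul_le_mul_of_nonneg_left (csInf_le hAb hx) ha)
        (mul_le_mul_of_nonneg_left (csInf_le hBb hy) hb)
    · exact add_le_add (mul_le_mul_of_nonneg_left (le_csSup hAa hx) ha)
        (mul_le_mul_of_nonneg_left (le_csSup hBa hy) hb)
  have hIoo : ∀ (D : Set ℝ), Convex ℝ D → D.Nonempty → BddAbove D → BddBelow D →
      Ioo (sInf D) (sSup D) ⊆ D := by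
    intro D hD hDne hDa hDb t ht
    obtain ⟨x, hx, hxt⟩ := exists_lt_of_csInf_lt hDne ht.1
    obtain ⟨y, hy, hty⟩ := exists_lt_of_lt_csSup hDne ht.2
    exact hD.ordConnected.out hx hy ⟨hxt.le, hty.le⟩
  have hvolA : ENNReal.ofReal (sSup A - sInf A) ≤ volume A := by
    calc ENNReal.ofReal (sSup A - sInf A) = volume (Ioo (sInf A) (sSup A)) := by
          rw [Real.volume_Ioo]
      _ ≤ volume A := measure_mono (hIoo A hA hAne hAa hAb)
  have hvolB : ENNReal.ofReal (sSup B - sInf B) ≤ volume B := by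
    calc ENNReal.ofReal (sSup B - sInf B) = volume (Ioo (sInf B) (sSup B)) := by
          rw [Real.volume_Ioo]
      _ ≤ volume B := measure_mono (hIoo B hB hBne hBa hBb)
  calc volume C ≤ volume (Icc (a * sInf A + b * sInf B) (a * sSup A + b * sSup B)) :=
        measure_mono hsub
    _ = ENNReal.ofReal (a * (sSup A - sInf A) + b * (sSup B - sInf B)) := by
        rw [Real.volume_Icc]; ring_nf
    _ = ENNReal.ofReal a * ENNReal.ofReal (sSup A - sInf A)
        + ENNReal.ofReal b * ENNReal.ofReal (sSup B - sInf B) := by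
        rw [ENNReal.ofReal_add (mul_nonneg ha hdA) (mul_nonneg hb hdB),
          ENNReal.ofReal_mul ha, ENNReal.ofReal_mul hb]
    _ ≤ _ := add_le_add (mul_le_mul_right hvolA _) (mul_le_mul_right hvolB _)

/-- Description of the convex hull of `insert z K`. -/
lemma hull_insert_eq {E : Type*} [AddCommGroup E] [Module ℝ E] (K : Set E)
    (hK : Convex ℝ K) (hne : K.Nonempty) (z : E) :
    convexHull ℝ (insert z K) =
      {p | ∃ θ ∈ Icc (0:ℝ) 1, ∃ k ∈ K, p = θ • z + (1 - θ) • k} := by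
  rw [convexHull_insert hne, hK.convexHull_eq]
  ext p
  simp only [mem_convexJoin, mem_singleton_iff, mem_setOf_eq]
  constructor
  · rintro ⟨x, rfl, k, hk, θ, c, hθ, hc, hθc, rfl⟩
    exact ⟨θ, ⟨hθ, by linarith⟩, k, hk, by rw [show (1:ℝ) - θ = c by linarith]⟩
  · rintro ⟨θ, ⟨h0, h1⟩, k, hk, rfl⟩
    exact ⟨z, rfl, k, hk, θ, 1 - θ, h0, by linarith, by ring, rfl⟩

set_option maxHeartbeats 1000000 in
/-- For a convex body `K` in `ℝⁿ`, the function
`z ↦ vol_n(conv({z} ∪ K) \ K)` is convex on `ℝⁿ`. -/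
theorem illumination_functional_convex (n : ℕ)
    (K : Set (EuclideanSpace ℝ (Fin n)))
    (hKc : IsCompact K) (hKconv : Convex ℝ K) (hKint : (interior K).Nonempty) :
    ConvexOn ℝ Set.univ
      (fun z : EuclideanSpace ℝ (Fin n) =>
        (volume (convexHull ℝ ({z} ∪ K) \ K)).toReal) := by
  have hKne : K.Nonempty := hKint.mono interior_subset
  set H : EuclideanSpace ℝ (Fin n) → Set (EuclideanSpace ℝ (Fin n)) :=
    fun z => convexHull ℝ ({z} ∪ K) with hH
  have hHeq : ∀ z, H z = {p | ∃ θ ∈ Icc (0:ℝ) 1, ∃ k ∈ K, p = θ • z + (1 - θ) • k} := by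
    intro z
    rw [hH]
    simp only [singleton_union]
    exact hull_insert_eq K hKconv hKne z
  have hHcomp : ∀ z, IsCompact (H z) := by
    intro z
    have : H z = (fun p : ℝ × EuclideanSpace ℝ (Fin n) => p.1 • z + (1 - p.1) • p.2) '' (Icc (0:ℝ) 1 ×ˢ K) := by
      rw [hHeq]; ext p
      simp only [mem_image, mem_prod, Prod.exists, mem_setOf_eq]
      constructor
      · rintro ⟨θ, hθ, k, hk, rfl⟩; exact ⟨θ, k, ⟨hθ, hk⟩, rfl⟩
      · rintro ⟨θ, k, ⟨hθ, hk⟩, rfl⟩; exact ⟨θ, hθ, k, hk, rfl⟩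
    rw [this]
    exact (isCompact_Icc.prod hKc).image
      ((continuous_fst.smul continuous_const).add
        ((continuous_const.sub continuous_fst).smul continuous_snd))
  have hKH : ∀ z, K ⊆ H z := fun z => (subset_union_right).trans (subset_convexHull ℝ _)
  have hHconv : ∀ z, Convex ℝ (H z) := fun z => convex_convexHull ℝ _
  have hHfin : ∀ z, volume (H z) ≠ ⊤ := fun z => ((hHcomp z).measure_lt_top).ne
  have hKfin : volume K ≠ ⊤ := hKc.measure_lt_top.ne
  have hKm : MeasurableSet K := hKc.isClosed.measurableSet
  refine ⟨convex_univ, fun z₁ _ z₂ _ a b ha hb hab => ?_⟩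
  by_cases hz : z₁ = z₂
  · subst hz
    have h1 : a • z₁ + b • z₁ = z₁ := Convex.combo_self hab z₁
    rw [h1]
    show (volume (convexHull ℝ ({z₁} ∪ K) \ K)).toReal ≤
      a • (volume (convexHull ℝ ({z₁} ∪ K) \ K)).toReal +
      b • (volume (convexHull ℝ ({z₁} ∪ K) \ K)).toReal
    rw [smul_eq_mul, smul_eq_mul, ← add_mul, hab, one_mul]
  -- key volume inequality
  have key : volume (H (a • z₁ + b • z₂)) ≤
      ENNReal.ofReal a * volume (H z₁) + ENNReal.ofReal b * volume (H z₂) := by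
    rcases Nat.eq_zero_or_pos n with hn | hn
    · exfalso; subst hn
      exact hz (PiLp.ext fun i => i.elim0)
    obtain ⟨m, rfl⟩ := Nat.exists_eq_succ_of_ne_zero hn.ne'
    set zt := a • z₁ + b • z₂ with hzt
    set u : EuclideanSpace ℝ (Fin (m+1)) := z₂ - z₁ with hu_def
    have hu : u ≠ 0 := sub_ne_zero.2 (Ne.symm hz)
    have hnu : ‖u‖ ≠ 0 := norm_ne_zero_iff.2 hu
    have hv : Orthonormal ℝ
        (Set.restrict {(0 : Fin (m+1))} (fun _ : Fin (m+1) => ‖u‖⁻¹ • u)) := by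
      constructor
      · intro i; exact norm_smul_inv_norm hu
      · intro i j hij
        exact absurd (Subtype.ext (by
          have h1 := i.2; have h2 := j.2
          simp only [Set.mem_singleton_iff] at h1 h2
          rw [h1, h2])) hij
    obtain ⟨bas, hbas⟩ := hv.exists_orthonormalBasis_extension_of_card_eq
      (by simp)
    have hb0 : bas 0 = ‖u‖⁻¹ • u := hbas 0 rfl
    have hrepr_u : bas.repr u = ‖u‖ • EuclideanSpace.single 0 1 := by
      have h : u = ‖u‖ • bas 0 := by
        rw [hb0, smul_smul, mul_inv_cancel₀ hnu, one_smul]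
      calc bas.repr u = bas.repr (‖u‖ • bas 0) := by rw [← h]
        _ = ‖u‖ • bas.repr (bas 0) := _root_.map_smul _ _ _
        _ = ‖u‖ • EuclideanSpace.single 0 1 := by rw [bas.repr_self]
    set φ : EuclideanSpace ℝ (Fin (m+1)) → ℝ := fun p => bas.repr p 0 with hφ
    set ψ : EuclideanSpace ℝ (Fin (m+1)) → (Fin m → ℝ) :=
      fun p i => bas.repr p ((0 : Fin (m+1)).succAbove i) with hψ
    set e : EuclideanSpace ℝ (Fin (m+1)) ≃ᵐ ℝ × (Fin m → ℝ) :=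
      (bas.measurableEquiv.trans ((MeasurableEquiv.toLp 2 (Fin (m+1) → ℝ)).symm)).trans
        (MeasurableEquiv.piFinSuccAbove (fun _ => ℝ) 0) with he
    have he_apply : ∀ p, e p = (φ p, ψ p) := fun p => rfl
    have hme : MeasurePreserving e := by
      have h1 := bas.measurePreserving_measurableEquiv
      have h2 := EuclideanSpace.volume_preserving_symm_measurableEquiv_toLp (Fin (m+1))
      have h3 := volume_preserving_piFinSuccAbove (fun _ : Fin (m+1) => ℝ) 0
      exact (h3.comp (h2.comp h1) : _)
    have himg : ∀ X : Set (EuclideanSpace ℝ (Fin (m+1))), MeasurableSet X →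
        volume (e '' X) = volume X := by
      intro X hX
      rw [MeasurableEquiv.image_eq_preimage_symm]
      exact (MeasurePreserving.symm e hme).measure_preimage hX.nullMeasurableSet
    -- linearity of e
    have hlin : IsLinearMap ℝ (⇑e) := by
      constructor
      · intro p q
        rw [he_apply, he_apply, he_apply, Prod.mk_add_mk, Prod.mk.injEq]
        constructor
        · simp [hφ, map_add]
        · funext i; simp [hψ, map_add]
      · intro c p
        rw [he_apply, he_apply, Prod.smul_mk, Prod.mk.injEq]
        constructor
        · simp [hφ, _root_.map_smul]
        · funext i; simp [hψ, _root_.map_smul]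
    -- ψ is constant along z₁ ↦ z₂
    have hψ_eq : ψ z₁ = ψ z₂ := by
      funext i
      have : ψ z₂ - ψ z₁ = ψ u := by
        funext j
        simp [hψ, hu_def, map_sub]
      have h2 : ψ u i = 0 := by
        have hne0 : (0 : Fin (m+1)).succAbove i ≠ 0 := by
          rw [Fin.succAbove_zero]; exact Fin.succ_ne_zero i
        simp only [hψ, hrepr_u, PiLp.smul_apply, smul_eq_mul,
          EuclideanSpace.single_apply, if_neg hne0, mul_zero]
      have h3 := congrFun this i
      simp only [Pi.sub_apply] at h3
      linarith [h3, h2]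
    -- image sets
    set S1 : Set (ℝ × (Fin m → ℝ)) := e '' H z₁ with hS1
    set S2 : Set (ℝ × (Fin m → ℝ)) := e '' H z₂ with hS2
    set St : Set (ℝ × (Fin m → ℝ)) := e '' H zt with hSt
    have hcont : Continuous (⇑e) := by
      have : ⇑e = fun p => (φ p, ψ p) := funext he_apply
      rw [this]
      refine Continuous.prodMk ?_ (continuous_pi fun i => ?_)
      · exact (EuclideanSpace.proj (0 : Fin (m+1))).continuous.comp bas.repr.continuous
      · exact (EuclideanSpace.proj ((0 : Fin (m+1)).succAbove i)).continuous.comp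
          bas.repr.continuous
    have hS1c : IsCompact S1 := (hHcomp z₁).image hcont
    have hS2c : IsCompact S2 := (hHcomp z₂).image hcont
    have hStc : IsCompact St := (hHcomp zt).image hcont
    have hS1m : MeasurableSet S1 := hS1c.isClosed.measurableSet
    have hS2m : MeasurableSet S2 := hS2c.isClosed.measurableSet
    have hStm : MeasurableSet St := hStc.isClosed.measurableSet
    have hfib_conv : ∀ (S : Set (ℝ × (Fin m → ℝ))), Convex ℝ S → ∀ y : Fin m → ℝ,
        Convex ℝ ((fun x => (x, y)) ⁻¹' S) := by
      intro S hS y x₁ hx₁ x₂ hx₂ c d hc hd hcd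
      have h := hS hx₁ hx₂ hc hd hcd
      have heq : c • ((x₁ : ℝ), y) + d • (x₂, y) = (c • x₁ + d • x₂, y) := by
        rw [Prod.smul_mk, Prod.smul_mk, Prod.mk_add_mk, Convex.combo_self hcd]
      rw [heq] at h
      exact h
    have hfib_bdd : ∀ (S : Set (ℝ × (Fin m → ℝ))), IsCompact S → ∀ y : Fin m → ℝ,
        BddAbove ((fun x => (x, y)) ⁻¹' S) ∧ BddBelow ((fun x => (x, y)) ⁻¹' S) := by
      intro S hS y
      have hsub : (fun x => (x, y)) ⁻¹' S ⊆ Prod.fst '' S := fun x hx => ⟨(x, y), hx, rfl⟩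
      have hc : IsCompact (Prod.fst '' S) := hS.image continuous_fst
      exact ⟨hc.bddAbove.mono hsub, hc.bddBelow.mono hsub⟩
    have hmemH : ∀ (z : EuclideanSpace ℝ (Fin (m+1))) (θ : ℝ) k, θ ∈ Icc (0:ℝ) 1 → k ∈ K →
        θ • z + (1 - θ) • k ∈ H z := by
      intro z θ k hθ hk
      rw [hHeq]; exact ⟨θ, hθ, k, hk, rfl⟩
    -- linearity of the coordinates
    have hφlin : ∀ (c c' : ℝ) (v w), φ (c • v + c' • w) = c * φ v + c' * φ w := by
      intro c c' v w
      simp [hφ, map_add, _root_.map_smul, PiLp.add_apply, PiLp.smul_apply, smul_eq_mul]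
    have hψlin : ∀ (c c' : ℝ) (v w) (i : Fin m),
        ψ (c • v + c' • w) i = c * ψ v i + c' * ψ w i := by
      intro c c' v w i
      simp [hψ, map_add, _root_.map_smul, PiLp.add_apply, PiLp.smul_apply, smul_eq_mul]
    have hψzt : ∀ i, ψ zt i = ψ z₁ i := by
      intro i
      rw [hzt, hψlin a b z₁ z₂ i, ← congrFun hψ_eq i, ← add_mul, hab, one_mul]
    -- fiber inclusion
    have hfib : ∀ y : Fin m → ℝ, ∀ x ∈ (fun x => (x, y)) ⁻¹' St,
        ∃ x₁ ∈ (fun x => (x, y)) ⁻¹' S1, ∃ x₂ ∈ (fun x => (x, y)) ⁻¹' S2,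
          x = a * x₁ + b * x₂ := by
      intro y x hx
      obtain ⟨p, hp, hep⟩ := hx
      rw [hHeq] at hp
      obtain ⟨θ, hθ, k, hk, rfl⟩ := hp
      have hxy : (φ (θ • zt + (1 - θ) • k), ψ (θ • zt + (1 - θ) • k)) = (x, y) := by
        rw [← he_apply]; exact hep
      have hφp : φ (θ • zt + (1 - θ) • k) = x := congrArg Prod.fst hxy
      have hψp : ψ (θ • zt + (1 - θ) • k) = y := congrArg Prod.snd hxy
      set p₁ := θ • z₁ + (1 - θ) • k with hp₁
      set p₂ := θ • z₂ + (1 - θ) • k with hp₂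
      have hψp₁ : ψ p₁ = y := by
        funext i
        rw [hp₁, hψlin θ (1 - θ) z₁ k i, ← hψzt i, ← hψlin θ (1 - θ) zt k i]
        exact congrFun hψp i
      have hψp₂ : ψ p₂ = y := by
        funext i
        rw [hp₂, hψlin θ (1 - θ) z₂ k i, ← congrFun hψ_eq i, ← hψzt i,
          ← hψlin θ (1 - θ) zt k i]
        exact congrFun hψp i
      refine ⟨φ p₁, ⟨p₁, hmemH z₁ θ k hθ hk, by rw [he_apply, hψp₁]⟩,
        φ p₂, ⟨p₂, hmemH z₂ θ k hθ hk, by rw [he_apply, hψp₂]⟩, ?_⟩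
      have hφzt : φ zt = a * φ z₁ + b * φ z₂ := by rw [hzt]; exact hφlin a b z₁ z₂
      rw [← hφp, hφlin θ (1 - θ) zt k, hp₁, hφlin θ (1 - θ) z₁ k,
        hp₂, hφlin θ (1 - θ) z₂ k, hφzt]
      linear_combination (-(1 - θ) * φ k) * hab
    -- Fubini
    have hvol_le : volume St ≤ ENNReal.ofReal a * volume S1 + ENNReal.ofReal b * volume S2 := by
      calc volume St = ∫⁻ y, volume ((fun x => (x, y)) ⁻¹' St) := by
            rw [MeasureTheory.Measure.volume_eq_prod, Measure.prod_apply_symm hStm]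
        _ ≤ ∫⁻ y, (ENNReal.ofReal a * volume ((fun x => (x, y)) ⁻¹' S1)
              + ENNReal.ofReal b * volume ((fun x => (x, y)) ⁻¹' S2)) := by
            refine lintegral_mono fun y => ?_
            exact oneDim_vol_le _ _ _ a b ha hb
              (hfib_conv S1 ((hHconv z₁).is_linear_image hlin) y)
              (hfib_conv S2 ((hHconv z₂).is_linear_image hlin) y)
              (hfib_bdd S1 hS1c y).1 (hfib_bdd S1 hS1c y).2
              (hfib_bdd S2 hS2c y).1 (hfib_bdd S2 hS2c y).2
              (hfib y)
        _ = ENNReal.ofReal a * volume S1 + ENNReal.ofReal b * volume S2 := by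
            rw [lintegral_add_left ((measurable_measure_prodMk_right hS1m).const_mul _),
              lintegral_const_mul _ (measurable_measure_prodMk_right hS1m),
              lintegral_const_mul _ (measurable_measure_prodMk_right hS2m),
              ← Measure.prod_apply_symm hS1m, ← Measure.prod_apply_symm hS2m,
              ← MeasureTheory.Measure.volume_eq_prod]
    calc volume (H zt) = volume St := (himg _ (hHcomp zt).isClosed.measurableSet).symm
      _ ≤ ENNReal.ofReal a * volume S1 + ENNReal.ofReal b * volume S2 := hvol_le
      _ = ENNReal.ofReal a * volume (H z₁) + ENNReal.ofReal b * volume (H z₂) := by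
          rw [hS1, hS2, himg _ (hHcomp z₁).isClosed.measurableSet,
            himg _ (hHcomp z₂).isClosed.measurableSet]
  -- finish
  have hdiff : ∀ z, volume (H z \ K) = volume (H z) - volume K := by
    intro z
    rw [measure_diff (hKH z) hKm.nullMeasurableSet hKfin]
  have hKle : ∀ z, volume K ≤ volume (H z) := fun z => measure_mono (hKH z)
  show (volume (H (a • z₁ + b • z₂) \ K)).toReal ≤
      a * (volume (H z₁ \ K)).toReal + b * (volume (H z₂ \ K)).toReal
  rw [hdiff, hdiff, hdiff,
    ENNReal.toReal_sub_of_le (hKle _) (hHfin _),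
    ENNReal.toReal_sub_of_le (hKle _) (hHfin _),
    ENNReal.toReal_sub_of_le (hKle _) (hHfin _)]
  have hκ : (volume K).toReal ≤ (volume (H z₁)).toReal :=
    ENNReal.toReal_mono (hHfin _) (hKle _)
  have hκ' : (volume K).toReal ≤ (volume (H z₂)).toReal :=
    ENNReal.toReal_mono (hHfin _) (hKle _)
  have hmain : (volume (H (a • z₁ + b • z₂))).toReal ≤
      a * (volume (H z₁)).toReal + b * (volume (H z₂)).toReal := by
    have := ENNReal.toReal_mono (by
      exact ENNReal.add_ne_top.2 ⟨ENNReal.mul_ne_top ENNReal.ofReal_ne_top (hHfin _),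
        ENNReal.mul_ne_top ENNReal.ofReal_ne_top (hHfin _)⟩) key
    rwa [ENNReal.toReal_add (ENNReal.mul_ne_top ENNReal.ofReal_ne_top (hHfin _))
      (ENNReal.mul_ne_top ENNReal.ofReal_ne_top (hHfin _)),
      ENNReal.toReal_mul, ENNReal.toReal_mul, ENNReal.toReal_ofReal ha,
      ENNReal.toReal_ofReal hb] at this
  have hsum : a * (volume K).toReal + b * (volume K).toReal = (volume K).toReal := by
    rw [← add_mul, hab, one_mul]
  nlinarith [hsum, hmain]
end

section
/- In the upper half-plane model of the hyperbolic plane, if η is the hyperbolic geodesic segment joining (u₀, v₀) to (u₁, v₁) (with v₀, v₁ > 0), then tan((1/2) ∫_η dx/y) = (u₁ - u₀)/(v₀ + v₁). -/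
open MeasureTheory Set intervalIntegral

private lemma hasDerivAt_fst' {f : ℝ → ℝ × ℝ} {f' : ℝ × ℝ} {t : ℝ} (h : HasDerivAt f f' t) :
    HasDerivAt (fun s => (f s).1) f'.1 t := by
  simpa [Function.comp_def] using ((hasFDerivAt_fst (𝕜 := ℝ)).comp t h.hasFDerivAt).hasDerivAt

private lemma hasDerivAt_snd' {f : ℝ → ℝ × ℝ} {f' : ℝ × ℝ} {t : ℝ} (h : HasDerivAt f f' t) :
    HasDerivAt (fun s => (f s).2) f'.2 t := by
  simpa [Function.comp_def] using ((hasFDerivAt_snd (𝕜 := ℝ)).comp t h.hasFDerivAt).hasDerivAt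

/-- if `η` is a hyperbolic geodesic segment in the upper half-plane
joining `(u₀, v₀)` to `(u₁, v₁)` (so its image lies on a vertical line or on a
circle centered on the x-axis), then
`tan((1/2) ∫_η dx/y) = (u₁ - u₀)/(v₀ + v₁)`. -/
theorem tan_half_integral_dx_over_y
    (u₀ v₀ u₁ v₁ : ℝ) (hv₀ : 0 < v₀) (hv₁ : 0 < v₁)
    (η : ℝ → ℝ × ℝ) (η' : ℝ → ℝ × ℝ)
    (hderiv : ∀ t ∈ Set.Icc (0:ℝ) 1, HasDerivAt η (η' t) t)
    (hderiv_cont : ContinuousOn η' (Set.Icc (0:ℝ) 1))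
    (hpos : ∀ t ∈ Set.Icc (0:ℝ) 1, 0 < (η t).2)
    (hinj : Set.InjOn η (Set.Icc (0:ℝ) 1))
    (h0 : η 0 = (u₀, v₀)) (h1 : η 1 = (u₁, v₁))
    (hgeo : (∀ t ∈ Set.Icc (0:ℝ) 1, (η t).1 = u₀) ∨
      ∃ c R : ℝ, ∀ t ∈ Set.Icc (0:ℝ) 1, ((η t).1 - c) ^ 2 + (η t).2 ^ 2 = R ^ 2) :
    Real.tan ((1 / 2) * ∫ t in (0:ℝ)..1, (η' t).1 / (η t).2) =
      (u₁ - u₀) / (v₀ + v₁) := by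
  have h01 : (0:ℝ) ≤ 1 := by norm_num
  have hηcont : ContinuousOn η (Set.Icc (0:ℝ) 1) :=
    fun t ht => (hderiv t ht).continuousAt.continuousWithinAt
  rcases hgeo with hvert | ⟨c, R, hcirc⟩
  · -- vertical case
    have hu : u₁ = u₀ := by
      have := hvert 1 (by norm_num)
      rwa [h1] at this
    have hzero : ∀ t ∈ Set.Icc (0:ℝ) 1, (η' t).1 = 0 := by
      intro t ht
      have hud := (uniqueDiffOn_Icc (by norm_num : (0:ℝ) < 1)) t ht
      have hA : HasDerivWithinAt (fun s => (η s).1) (η' t).1 (Set.Icc 0 1) t :=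
        (hasDerivAt_fst' (hderiv t ht)).hasDerivWithinAt
      have hB : HasDerivWithinAt (fun s => (η s).1) 0 (Set.Icc 0 1) t :=
        (hasDerivWithinAt_const t _ u₀).congr (fun s hs => hvert s hs) (hvert t ht)
      rw [← hA.derivWithin hud, hB.derivWithin hud]
    have : ∫ t in (0:ℝ)..1, (η' t).1 / (η t).2 = 0 := by
      rw [intervalIntegral.integral_congr (g := fun _ => (0:ℝ))
        (by rw [Set.uIcc_of_le h01]; intro t ht; simp [hzero t ht])]
      simp
    rw [this, hu]
    simp
  · -- circle case
    set x : ℝ → ℝ := fun t => (η t).1 with hxdef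
    set y : ℝ → ℝ := fun t => (η t).2 with hydef
    set r : ℝ := Real.sqrt (R ^ 2) with hrdef
    have hr0 : 0 ≤ r := Real.sqrt_nonneg _
    have hr2 : r ^ 2 = R ^ 2 := Real.sq_sqrt (sq_nonneg R)
    have hc : ∀ t ∈ Set.Icc (0:ℝ) 1, (x t - c) ^ 2 + (y t) ^ 2 = r ^ 2 := by
      intro t ht; rw [hr2]; exact hcirc t ht
    have hc0 : (u₀ - c) ^ 2 + v₀ ^ 2 = r ^ 2 := by
      have := hc 0 (by norm_num); rwa [show x 0 = u₀ by simp [hxdef, h0],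
        show y 0 = v₀ by simp [hydef, h0]] at this
    have hc1 : (u₁ - c) ^ 2 + v₁ ^ 2 = r ^ 2 := by
      have := hc 1 (by norm_num); rwa [show x 1 = u₁ by simp [hxdef, h1],
        show y 1 = v₁ by simp [hydef, h1]] at this
    have hrpos : 0 < r := by nlinarith
    have hyr : ∀ t ∈ Set.Icc (0:ℝ) 1, 0 < y t + r := fun t ht => by
      have := hpos t ht; positivity
    set F : ℝ → ℝ := fun t => 2 * Real.arctan ((x t - c) / (y t + r)) with hF
    have hFcont : ContinuousOn F (Set.Icc (0:ℝ) 1) := by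
      have hq : ContinuousOn (fun t => (x t - c) / (y t + r)) (Set.Icc (0:ℝ) 1) :=
        ((continuous_fst.comp_continuousOn hηcont).sub continuousOn_const).div
          ((continuous_snd.comp_continuousOn hηcont).add continuousOn_const)
          (fun t ht => (hyr t ht).ne')
      exact continuousOn_const.mul (Real.continuous_arctan.comp_continuousOn hq)
    have hint : IntervalIntegrable (fun t => (η' t).1 / (η t).2) volume 0 1 := by
      apply ContinuousOn.intervalIntegrable
      rw [Set.uIcc_of_le h01]
      exact (continuous_fst.comp_continuousOn hderiv_cont).div
        (continuous_snd.comp_continuousOn hηcont) (fun t ht => (hpos t ht).ne')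
    have hFderiv : ∀ t ∈ Set.Ioo (0:ℝ) 1, HasDerivWithinAt F ((η' t).1 / (η t).2) (Set.Ioi t) t := by
      intro t ht
      have ht' : t ∈ Set.Icc (0:ℝ) 1 := Set.Ioo_subset_Icc_self ht
      have hx' : HasDerivAt x (η' t).1 t := hasDerivAt_fst' (hderiv t ht')
      have hy' : HasDerivAt y (η' t).2 t := hasDerivAt_snd' (hderiv t ht')
      have hyne : y t + r ≠ 0 := (hyr t ht').ne'
      -- constraint derivative
      have hrel : (x t - c) * (η' t).1 + y t * (η' t).2 = 0 := by
        have hg : HasDerivAt (fun s => (x s - c) ^ 2 + (y s) ^ 2)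
            (2 * (x t - c) ^ 1 * (η' t).1 + 2 * (y t) ^ 1 * (η' t).2) t :=
          ((hx'.sub_const c).pow 2).add (hy'.pow 2)
        have hnb : Set.Icc (0:ℝ) 1 ∈ nhds t := Icc_mem_nhds ht.1 ht.2
        have hg0 : HasDerivAt (fun s => (x s - c) ^ 2 + (y s) ^ 2) 0 t := by
          apply (hasDerivAt_const t (r ^ 2)).congr_of_eventuallyEq
          filter_upwards [hnb] with s hs using (hc s hs)
        have := hg.unique hg0
        nlinarith [this]
      have hq : HasDerivAt (fun s => (x s - c) / (y s + r))
          (((η' t).1 * (y t + r) - (x t - c) * (η' t).2) / (y t + r) ^ 2) t :=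
        (hx'.sub_const c).div (hy'.add_const r) hyne
      have harc := ((Real.hasDerivAt_arctan ((x t - c) / (y t + r))).comp t hq).const_mul 2
      have hval : 2 * (1 / (1 + ((x t - c) / (y t + r)) ^ 2) *
          (((η' t).1 * (y t + r) - (x t - c) * (η' t).2) / (y t + r) ^ 2)) =
          (η' t).1 / (η t).2 := by
        have hyt : (η t).2 ≠ 0 := (hpos t ht').ne'
        have h1q : 1 + ((x t - c) / (y t + r)) ^ 2 ≠ 0 := by positivity
        have hcir := hc t ht'
        field_simp
        have hyy : (η t).2 = y t := rfl
        rw [hyy]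
        linear_combination (η' t).1 * hcir -
          2 * (x t - c) * hrel
      exact ((harc.congr_deriv (by rw [← hval])).hasDerivWithinAt)
    have hFTC : ∫ t in (0:ℝ)..1, (η' t).1 / (η t).2 = F 1 - F 0 :=
      intervalIntegral.integral_eq_sub_of_hasDeriv_right_of_le h01 hFcont hFderiv hint
    have hF1 : F 1 = 2 * Real.arctan ((u₁ - c) / (v₁ + r)) := by
      simp [hF, hxdef, hydef, h1]
    have hF0 : F 0 = 2 * Real.arctan ((u₀ - c) / (v₀ + r)) := by
      simp [hF, hxdef, hydef, h0]
    rw [hFTC, hF1, hF0]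
    set a : ℝ := (u₁ - c) / (v₁ + r) with ha
    set b : ℝ := (u₀ - c) / (v₀ + r) with hb
    have hab : a * (-b) < 1 := by
      have hden0 : 0 < v₀ + r := by linarith
      have hden1 : 0 < v₁ + r := by linarith
      have hnum : 0 < (u₁ - c) * (u₀ - c) + (v₁ + r) * (v₀ + r) := by
        nlinarith [sq_nonneg ((u₀ - c) + (u₁ - c))]
      have : a * b > -1 := by
        rw [ha, hb, div_mul_div_comm, gt_iff_lt, neg_lt, ← neg_div,
          div_lt_one (by positivity)]
        nlinarith
      linarith
    have : (1:ℝ) / 2 * (2 * Real.arctan a - 2 * Real.arctan b) =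
        Real.arctan a + Real.arctan (-b) := by
      rw [Real.arctan_neg]; ring
    rw [this, Real.arctan_add hab, Real.tan_arctan]
    have hden0 : 0 < v₀ + r := by linarith
    have hden1 : 0 < v₁ + r := by linarith
    have h1ab : (0:ℝ) < 1 - a * -b := by nlinarith
    rw [div_eq_div_iff h1ab.ne' (by positivity)]
    rw [ha, hb]
    field_simp
    linear_combination (u₁ - c) * hc0 - (u₀ - c) * hc1
end

section
/- Let S = [-1,1]² ⊂ ℝ², let φ_s(x,y) = (1 + x² + y²)^{-3/2}, and for r > 1 set z = (r,0), z' = (r,1). Then the weighted volume of conv({z'} ∪ S) \ S with respect to φ_s is strictly smaller than that of conv({z} ∪ S) \ S; explicitly, ∫_1^r ∫_{-(r-s)/(r-1)}^{(r-s)/(r-1)} (1 + s² + (a + (s-1)/(r-1))²)^{-3/2} da ds < ∫_1^r ∫_{-(r-s)/(r-1)}^{(r-s)/(r-1)} (1 + s² + a²)^{-3/2} da ds. -/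
open MeasureTheory Set intervalIntegral

lemma phi_cont : Continuous (fun p : ℝ × ℝ => (1 + p.1 ^ 2 + p.2 ^ 2) ^ (-(3:ℝ)/2)) := by
  apply Continuous.rpow_const (by continuity)
  intro p; left; positivity

lemma region_integral (r : ℝ) (hr : 1 < r) (g h : ℝ → ℝ)
    (hgm : Continuous g) (hhm : Continuous h)
    (hb : ∀ s ∈ Ioc (1:ℝ) r, -1 ≤ g s ∧ h s ≤ 1) (hgh : ∀ s ∈ Ioc (1:ℝ) r, g s ≤ h s) :
    (∫ p in {p : ℝ × ℝ | 1 < p.1 ∧ p.1 ≤ r ∧ g p.1 ≤ p.2 ∧ p.2 ≤ h p.1},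
        (1 + p.1 ^ 2 + p.2 ^ 2) ^ (-(3:ℝ)/2))
      = ∫ s in (1:ℝ)..r, ∫ a in (g s)..(h s), (1 + s ^ 2 + a ^ 2) ^ (-(3:ℝ)/2) := by
  set φ : ℝ × ℝ → ℝ := fun p => (1 + p.1 ^ 2 + p.2 ^ 2) ^ (-(3:ℝ)/2) with hφ
  set A : Set (ℝ × ℝ) := {p : ℝ × ℝ | 1 < p.1 ∧ p.1 ≤ r ∧ g p.1 ≤ p.2 ∧ p.2 ≤ h p.1} with hA
  have hAm : MeasurableSet A := by
    apply MeasurableSet.inter (measurableSet_lt measurable_const measurable_fst)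
    apply MeasurableSet.inter (measurableSet_le measurable_fst measurable_const)
    exact MeasurableSet.inter
      (measurableSet_le (hgm.measurable.comp measurable_fst) measurable_snd)
      (measurableSet_le measurable_snd (hhm.measurable.comp measurable_fst))
  have hAK : A ⊆ Icc ((1:ℝ), (-1:ℝ)) ((r:ℝ), (1:ℝ)) := by
    rintro ⟨s, a⟩ ⟨h1, h2, h3, h4⟩
    have hb' := hb s ⟨h1, h2⟩
    exact ⟨⟨h1.le, hb'.1.trans h3⟩, ⟨h2, h4.trans hb'.2⟩⟩
  have hint : IntegrableOn φ A := by
    apply IntegrableOn.mono_set _ hAK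
    exact (phi_cont.continuousOn).integrableOn_compact isCompact_Icc
  have hindint : Integrable (A.indicator φ) := (integrable_indicator_iff hAm).2 hint
  rw [← MeasureTheory.integral_indicator hAm]
  rw [show (volume : Measure (ℝ × ℝ)) = (volume : Measure ℝ).prod volume from MeasureTheory.Measure.volume_eq_prod ℝ ℝ] at hindint ⊢
  rw [MeasureTheory.integral_prod _ hindint]
  have key : ∀ s : ℝ, (∫ a : ℝ, A.indicator φ (s, a))
      = (Ioc (1:ℝ) r).indicator (fun s => ∫ a in Ioc (g s) (h s), (1 + s ^ 2 + a ^ 2) ^ (-(3:ℝ)/2)) s := by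
    intro s
    by_cases hs : s ∈ Ioc (1:ℝ) r
    · rw [indicator_of_mem hs]
      have hslice : ∀ a : ℝ, A.indicator φ (s, a)
          = (Icc (g s) (h s)).indicator (fun a => (1 + s ^ 2 + a ^ 2) ^ (-(3:ℝ)/2)) a := by
        intro a
        by_cases ha : a ∈ Icc (g s) (h s)
        · rw [indicator_of_mem ha, indicator_of_mem (by exact ⟨hs.1, hs.2, ha.1, ha.2⟩)]
        · rw [indicator_of_notMem ha, indicator_of_notMem]
          rintro ⟨-, -, h3, h4⟩; exact ha ⟨h3, h4⟩
      simp_rw [hslice]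
      rw [MeasureTheory.integral_indicator measurableSet_Icc, integral_Icc_eq_integral_Ioc]
    · rw [indicator_of_notMem hs]
      have : ∀ a : ℝ, A.indicator φ (s, a) = 0 := by
        intro a
        apply indicator_of_notMem
        rintro ⟨h1, h2, -⟩; exact hs ⟨h1, h2⟩
      simp [this]
  simp_rw [key]
  rw [MeasureTheory.integral_indicator measurableSet_Ioc,
    intervalIntegral.integral_of_le hr.le]
  apply setIntegral_congr_fun measurableSet_Ioc
  intro s hs
  exact (intervalIntegral.integral_of_le (hgh s hs)).symm

lemma f_cont (s : ℝ) : Continuous (fun t : ℝ => (1 + s ^ 2 + t ^ 2) ^ (-(3:ℝ)/2)) := by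
  apply Continuous.rpow_const (by continuity)
  intro t; left; positivity

lemma inner_lt (s L c : ℝ) (hL : 0 < L) (hc : 0 < c) :
    (∫ a in (-L)..L, (1 + s ^ 2 + (a + c) ^ 2) ^ (-(3:ℝ)/2)) <
      ∫ a in (-L)..L, (1 + s ^ 2 + a ^ 2) ^ (-(3:ℝ)/2) := by
  set f : ℝ → ℝ := fun t => (1 + s ^ 2 + t ^ 2) ^ (-(3:ℝ)/2) with hf
  have hfc : Continuous f := f_cont s
  have hI : ∀ a b : ℝ, IntervalIntegrable f volume a b := fun a b => hfc.intervalIntegrable a b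
  have e0 : (∫ a in (-L)..L, f (a + c)) = ∫ a in (-L + c)..(L + c), f a :=
    intervalIntegral.integral_comp_add_right f c
  have h1 : (∫ x in (-L)..(-L + c), f x) + ∫ x in (-L + c)..(L + c), f x
      = ∫ x in (-L)..(L + c), f x := integral_add_adjacent_intervals (hI _ _) (hI _ _)
  have h2 : (∫ x in (-L)..L, f x) + ∫ x in L..(L + c), f x
      = ∫ x in (-L)..(L + c), f x := integral_add_adjacent_intervals (hI _ _) (hI _ _)
  have e1 : (∫ x in (0:ℝ)..c, f (x + -L)) = ∫ x in (-L)..(-L + c), f x := by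
    rw [intervalIntegral.integral_comp_add_right f (-L)]
    norm_num [add_comm]
  have e2 : (∫ x in (0:ℝ)..c, f (x + L)) = ∫ x in L..(L + c), f x := by
    rw [intervalIntegral.integral_comp_add_right f L]
    norm_num [add_comm]
  have h4 : 0 < ∫ x in (0:ℝ)..c, (f (x + -L) - f (x + L)) := by
    apply intervalIntegral_pos_of_pos_on
    · exact ((hfc.comp (by continuity)).sub (hfc.comp (by continuity))).intervalIntegrable _ _
    · intro x hx
      have hb : 1 + s ^ 2 + (x + L) ^ 2 > 1 + s ^ 2 + (x + -L) ^ 2 := by nlinarith [hx.1, hx.2]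
      have := Real.rpow_lt_rpow_of_neg (x := 1 + s ^ 2 + (x + -L) ^ 2)
        (y := 1 + s ^ 2 + (x + L) ^ 2) (z := -(3:ℝ)/2) (by positivity) hb (by norm_num)
      simpa [hf] using sub_pos.2 this
    · exact hc
  have h5 : (∫ x in (0:ℝ)..c, (f (x + -L) - f (x + L)))
      = (∫ x in (0:ℝ)..c, f (x + -L)) - ∫ x in (0:ℝ)..c, f (x + L) := by
    apply intervalIntegral.integral_sub
    · exact (hfc.comp (by continuity)).intervalIntegrable _ _
    · exact (hfc.comp (by continuity)).intervalIntegrable _ _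
  rw [show (∫ a in (-L)..L, (1 + s ^ 2 + (a + c) ^ 2) ^ (-(3:ℝ)/2)) = ∫ a in (-L)..L, f (a + c) from rfl, e0]
  linarith [h1, h2, h4, h5.symm ▸ h4, e1, e2]

lemma hull_diff_eq (r b : ℝ) (hr : 1 < r) (hb0 : 0 ≤ b) (hb1 : b ≤ 1) :
    convexHull ℝ ({((r, b) : ℝ × ℝ)} ∪ Set.Icc (-1, -1) (1, 1)) \ Set.Icc (-1, -1) (1, 1)
      = {p : ℝ × ℝ | 1 < p.1 ∧ p.1 ≤ r ∧ b - (1 + b) * ((r - p.1) / (r - 1)) ≤ p.2 ∧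
          p.2 ≤ b + (1 - b) * ((r - p.1) / (r - 1))} := by
  have hr1 : (0:ℝ) < r - 1 := by linarith
  have hIcc : Convex ℝ (Set.Icc ((-1:ℝ), (-1:ℝ)) (1, 1)) := convex_Icc _ _
  have hhull : convexHull ℝ ({((r, b) : ℝ × ℝ)} ∪ Set.Icc (-1, -1) (1, 1))
      = convexJoin ℝ {((r, b) : ℝ × ℝ)} (Set.Icc (-1, -1) (1, 1)) := by
    rw [convexHull_union (singleton_nonempty _) (nonempty_Icc.2 (by constructor <;> norm_num)),
      convexHull_singleton, hIcc.convexHull_eq]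
  rw [hhull]
  ext ⟨s, a⟩
  simp only [mem_diff, mem_convexJoin, mem_singleton_iff, mem_setOf_eq, Set.mem_Icc,
    Prod.mk_le_mk, exists_eq_left]
  constructor
  · rintro ⟨⟨q, ⟨⟨hx1, hy1⟩, hx2, hy2⟩, hseg⟩, hns⟩
    rw [segment_eq_image] at hseg
    obtain ⟨t, ⟨ht0, ht1⟩, heq⟩ := hseg
    obtain ⟨x, y⟩ := q
    rw [Prod.ext_iff] at heq
    simp only [Prod.fst_add, Prod.snd_add, Prod.smul_fst, Prod.smul_snd, smul_eq_mul] at heq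
    obtain ⟨hs, ha⟩ := heq
    simp only at hx1 hy1 hx2 hy2 hs ha
    have hsr : s ≤ r := by nlinarith
    have hs1 : 1 < s := by
      by_contra hcon
      push_neg at hcon
      exact hns ⟨⟨by nlinarith, by nlinarith⟩, hcon, by nlinarith⟩
    have htL : t * (r - 1) ≤ r - s := by nlinarith
    have htL' : t ≤ (r - s) / (r - 1) := (le_div_iff₀ hr1).2 htL
    refine ⟨hs1, hsr, ?_, ?_⟩
    · have : b - (1 + b) * t ≤ a := by nlinarith
      nlinarith [mul_le_mul_of_nonneg_left htL' (by linarith : (0:ℝ) ≤ 1 + b)]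
    · have : a ≤ b + (1 - b) * t := by nlinarith
      nlinarith [mul_le_mul_of_nonneg_left htL' (by linarith : (0:ℝ) ≤ 1 - b)]
  · rintro ⟨hs1, hsr, hlo, hhi⟩
    have hns : ¬(((-1:ℝ) ≤ s ∧ (-1:ℝ) ≤ a) ∧ s ≤ 1 ∧ a ≤ 1) := by
      rintro ⟨-, hcon, -⟩; linarith
    rcases eq_or_lt_of_le hsr with hrs | hrs
    · have hL0 : (r - s) / (r - 1) = 0 := by rw [hrs]; simp
      have hab : a = b := by rw [hL0] at hlo hhi; nlinarith [hlo, hhi]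
      refine ⟨⟨(1, -1), ⟨Prod.mk_le_mk.2 ⟨by norm_num, by norm_num⟩,
        Prod.mk_le_mk.2 ⟨by norm_num, by norm_num⟩⟩, ?_⟩, hns⟩
      rw [segment_eq_image]
      exact ⟨0, ⟨le_refl 0, by norm_num⟩, by simp [Prod.ext_iff, hrs, hab]⟩
    · set t : ℝ := (r - s) / (r - 1) with hT
      have ht0 : 0 < t := div_pos (by linarith) hr1
      have ht1 : t ≤ 1 := by rw [div_le_one hr1]; linarith
      set y : ℝ := (a - (1 - t) * b) / t with hy
      refine ⟨⟨(1, y), ⟨Prod.mk_le_mk.2 ⟨by norm_num, ?_⟩,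
        Prod.mk_le_mk.2 ⟨le_refl 1, ?_⟩⟩, ?_⟩, hns⟩
      · rw [hy, le_div_iff₀ ht0]; nlinarith
      · rw [hy, div_le_one ht0]; nlinarith
      · rw [segment_eq_image]
        refine ⟨t, ⟨ht0.le, ht1⟩, ?_⟩
        simp only [Prod.ext_iff, Prod.fst_add, Prod.snd_add, Prod.smul_fst, Prod.smul_snd,
          smul_eq_mul]
        constructor
        · rw [hT]; field_simp; ring
        · rw [hy]; field_simp; ring

lemma cont_G : Continuous (fun p : ℝ × ℝ => ∫ t in (0:ℝ)..p.2, (1 + p.1 ^ 2 + t ^ 2) ^ (-(3:ℝ)/2)) := by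
  have h := @intervalIntegral.continuous_parametric_primitive_of_continuous ℝ ℝ _ _ _ volume _ _
    (fun s t => (1 + s ^ 2 + t ^ 2) ^ (-(3:ℝ)/2)) 0 phi_cont
  exact h

lemma repr0 (r : ℝ) (s : ℝ) :
    (∫ a in (-(r - s) / (r - 1))..((r - s) / (r - 1)), (1 + s ^ 2 + a ^ 2) ^ (-(3:ℝ)/2))
      = (∫ t in (0:ℝ)..((r - s) / (r - 1)), (1 + s ^ 2 + t ^ 2) ^ (-(3:ℝ)/2))
        - ∫ t in (0:ℝ)..(-((r - s) / (r - 1))), (1 + s ^ 2 + t ^ 2) ^ (-(3:ℝ)/2) := by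
  rw [show -(r - s) / (r - 1) = -((r - s) / (r - 1)) from neg_div _ _]
  have h := integral_add_adjacent_intervals (μ := volume) (a := (0:ℝ)) (b := -((r - s) / (r - 1)))
    (c := (r - s) / (r - 1)) ((f_cont s).intervalIntegrable _ _) ((f_cont s).intervalIntegrable _ _)
  linarith

lemma repr1 (r : ℝ) (hr : 1 < r) (s : ℝ) :
    (∫ a in (-(r - s) / (r - 1))..((r - s) / (r - 1)),
        (1 + s ^ 2 + (a + (s - 1) / (r - 1)) ^ 2) ^ (-(3:ℝ)/2))
      = (∫ t in (0:ℝ)..(1:ℝ), (1 + s ^ 2 + t ^ 2) ^ (-(3:ℝ)/2))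
        - ∫ t in (0:ℝ)..((2 * s - r - 1) / (r - 1)), (1 + s ^ 2 + t ^ 2) ^ (-(3:ℝ)/2) := by
  have hr1 : (0:ℝ) < r - 1 := by linarith
  rw [show -(r - s) / (r - 1) = -((r - s) / (r - 1)) from neg_div _ _,
    intervalIntegral.integral_comp_add_right
      (fun t => (1 + s ^ 2 + t ^ 2) ^ (-(3:ℝ)/2)) ((s - 1) / (r - 1))]
  rw [show -((r - s) / (r - 1)) + (s - 1) / (r - 1) = (2 * s - r - 1) / (r - 1) by
      field_simp; ring,
    show (r - s) / (r - 1) + (s - 1) / (r - 1) = 1 by field_simp; ring]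
  have h := integral_add_adjacent_intervals (μ := volume) (a := (0:ℝ))
    (b := (2 * s - r - 1) / (r - 1)) (c := (1:ℝ))
    ((f_cont s).intervalIntegrable _ _) ((f_cont s).intervalIntegrable _ _)
  linarith

set_option maxHeartbeats 1000000 in
/-- for the square `S = [-1,1]²`, the spherical weight
`φ_s(x,y) = (1+x²+y²)^{-3/2}`, and `r > 1`, the weighted volume of
`conv({(r,1)} ∪ S) \ S` is strictly smaller than that of `conv({(r,0)} ∪ S) \ S`;
explicitly, the corresponding double integrals satisfy a strict inequality. -/
theorem spherical_square_illumination_not_convex (r : ℝ) (hr : 1 < r) :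
    (∫ p in convexHull ℝ ({((r, 1) : ℝ × ℝ)} ∪ Set.Icc (-1, -1) (1, 1)) \
        Set.Icc (-1, -1) (1, 1),
        (1 + p.1 ^ 2 + p.2 ^ 2) ^ (-(3:ℝ)/2)) <
      (∫ p in convexHull ℝ ({((r, 0) : ℝ × ℝ)} ∪ Set.Icc (-1, -1) (1, 1)) \
        Set.Icc (-1, -1) (1, 1),
        (1 + p.1 ^ 2 + p.2 ^ 2) ^ (-(3:ℝ)/2)) ∧
    (∫ s in (1:ℝ)..r, ∫ a in (-(r - s) / (r - 1))..((r - s) / (r - 1)),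
        (1 + s ^ 2 + (a + (s - 1) / (r - 1)) ^ 2) ^ (-(3:ℝ)/2)) <
      (∫ s in (1:ℝ)..r, ∫ a in (-(r - s) / (r - 1))..((r - s) / (r - 1)),
        (1 + s ^ 2 + a ^ 2) ^ (-(3:ℝ)/2)) := by
  have hr1 : (0:ℝ) < r - 1 := by linarith
  set G : ℝ × ℝ → ℝ := fun p => ∫ t in (0:ℝ)..p.2, (1 + p.1 ^ 2 + t ^ 2) ^ (-(3:ℝ)/2) with hG
  have hc0 : Continuous (fun s : ℝ => ∫ a in (-(r - s) / (r - 1))..((r - s) / (r - 1)),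
      (1 + s ^ 2 + a ^ 2) ^ (-(3:ℝ)/2)) := by
    have : (fun s : ℝ => ∫ a in (-(r - s) / (r - 1))..((r - s) / (r - 1)),
        (1 + s ^ 2 + a ^ 2) ^ (-(3:ℝ)/2))
        = fun s : ℝ => G (s, (r - s) / (r - 1)) - G (s, -((r - s) / (r - 1))) := by
      funext s; exact repr0 r s
    rw [this]
    exact (cont_G.comp (by fun_prop)).sub (cont_G.comp (by fun_prop))
  have hc1 : Continuous (fun s : ℝ => ∫ a in (-(r - s) / (r - 1))..((r - s) / (r - 1)),
      (1 + s ^ 2 + (a + (s - 1) / (r - 1)) ^ 2) ^ (-(3:ℝ)/2)) := by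
    have : (fun s : ℝ => ∫ a in (-(r - s) / (r - 1))..((r - s) / (r - 1)),
        (1 + s ^ 2 + (a + (s - 1) / (r - 1)) ^ 2) ^ (-(3:ℝ)/2))
        = fun s : ℝ => G (s, 1) - G (s, (2 * s - r - 1) / (r - 1)) := by
      funext s; exact repr1 r hr s
    rw [this]
    exact (cont_G.comp (by fun_prop)).sub (cont_G.comp (by fun_prop))
  have hpos : 0 < ∫ s in (1:ℝ)..r,
      ((∫ a in (-(r - s) / (r - 1))..((r - s) / (r - 1)),
        (1 + s ^ 2 + a ^ 2) ^ (-(3:ℝ)/2))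
       - ∫ a in (-(r - s) / (r - 1))..((r - s) / (r - 1)),
        (1 + s ^ 2 + (a + (s - 1) / (r - 1)) ^ 2) ^ (-(3:ℝ)/2)) := by
    apply intervalIntegral_pos_of_pos_on ((hc0.sub hc1).intervalIntegrable 1 r) _ hr
    intro s hs
    have hL : 0 < (r - s) / (r - 1) := div_pos (by linarith [hs.2]) hr1
    have hcp : 0 < (s - 1) / (r - 1) := div_pos (by linarith [hs.1]) hr1
    have hkey := inner_lt s ((r - s) / (r - 1)) ((s - 1) / (r - 1)) hL hcp
    simp only [Pi.sub_apply, neg_div]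
    linarith
  rw [intervalIntegral.integral_sub (hc0.intervalIntegrable 1 r)
    (hc1.intervalIntegrable 1 r)] at hpos
  have part2 : (∫ s in (1:ℝ)..r, ∫ a in (-(r - s) / (r - 1))..((r - s) / (r - 1)),
        (1 + s ^ 2 + (a + (s - 1) / (r - 1)) ^ 2) ^ (-(3:ℝ)/2)) <
      (∫ s in (1:ℝ)..r, ∫ a in (-(r - s) / (r - 1))..((r - s) / (r - 1)),
        (1 + s ^ 2 + a ^ 2) ^ (-(3:ℝ)/2)) := by linarith
  have hLnn : ∀ s ∈ Ioc (1:ℝ) r, 0 ≤ (r - s) / (r - 1) ∧ (r - s) / (r - 1) ≤ 1 := by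
    intro s hs
    exact ⟨div_nonneg (by linarith [hs.2]) hr1.le, by rw [div_le_one hr1]; linarith [hs.1]⟩
  have eq0 : (∫ p in convexHull ℝ ({((r, 0) : ℝ × ℝ)} ∪ Set.Icc (-1, -1) (1, 1)) \
        Set.Icc (-1, -1) (1, 1), (1 + p.1 ^ 2 + p.2 ^ 2) ^ (-(3:ℝ)/2))
      = ∫ s in (1:ℝ)..r, ∫ a in (-(r - s) / (r - 1))..((r - s) / (r - 1)),
        (1 + s ^ 2 + a ^ 2) ^ (-(3:ℝ)/2) := by
    rw [hull_diff_eq r 0 hr le_rfl zero_le_one]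
    rw [region_integral r hr (fun s => 0 - (1 + 0) * ((r - s) / (r - 1)))
      (fun s => 0 + (1 - 0) * ((r - s) / (r - 1))) (by fun_prop) (by fun_prop)
      (fun s hs => ⟨by nlinarith [(hLnn s hs).1, (hLnn s hs).2],
        by nlinarith [(hLnn s hs).1, (hLnn s hs).2]⟩)
      (fun s hs => by nlinarith [(hLnn s hs).1])]
    simp_rw [show ∀ s : ℝ, (0:ℝ) - (1 + 0) * ((r - s) / (r - 1)) = -(r - s) / (r - 1) from
        fun s => by rw [neg_div]; ring,
      show ∀ s : ℝ, (0:ℝ) + (1 - 0) * ((r - s) / (r - 1)) = (r - s) / (r - 1) from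
        fun s => by ring]
  have eq1 : (∫ p in convexHull ℝ ({((r, 1) : ℝ × ℝ)} ∪ Set.Icc (-1, -1) (1, 1)) \
        Set.Icc (-1, -1) (1, 1), (1 + p.1 ^ 2 + p.2 ^ 2) ^ (-(3:ℝ)/2))
      = ∫ s in (1:ℝ)..r, ∫ a in (-(r - s) / (r - 1))..((r - s) / (r - 1)),
        (1 + s ^ 2 + (a + (s - 1) / (r - 1)) ^ 2) ^ (-(3:ℝ)/2) := by
    rw [hull_diff_eq r 1 hr zero_le_one le_rfl]
    rw [region_integral r hr (fun s => 1 - (1 + 1) * ((r - s) / (r - 1)))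
      (fun s => 1 + (1 - 1) * ((r - s) / (r - 1))) (by fun_prop) (by fun_prop)
      (fun s hs => ⟨by nlinarith [(hLnn s hs).1, (hLnn s hs).2],
        by nlinarith [(hLnn s hs).1, (hLnn s hs).2]⟩)
      (fun s hs => by nlinarith [(hLnn s hs).1])]
    have hshift : ∀ s : ℝ, (∫ a in (-(r - s) / (r - 1))..((r - s) / (r - 1)),
        (1 + s ^ 2 + (a + (s - 1) / (r - 1)) ^ 2) ^ (-(3:ℝ)/2))
        = ∫ a in (1 - (1 + 1) * ((r - s) / (r - 1)))..(1 + (1 - 1) * ((r - s) / (r - 1))),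
          (1 + s ^ 2 + a ^ 2) ^ (-(3:ℝ)/2) := by
      intro s
      rw [show -(r - s) / (r - 1) = -((r - s) / (r - 1)) from neg_div _ _,
        intervalIntegral.integral_comp_add_right
          (fun t => (1 + s ^ 2 + t ^ 2) ^ (-(3:ℝ)/2)) ((s - 1) / (r - 1))]
      congr 1
      · field_simp; ring
      · field_simp; ring
    simp_rw [hshift]
  exact ⟨by rw [eq0, eq1]; exact part2, part2⟩
end
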